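/- Let H be a hypergraph on n vertices such that every induced sub-hypergraph of H admits a proper (non-monochromatic) coloring with at most k colors, where k ≥ 2 is a constant. Then H admits a conflict-free coloring with at most 1 + log_{1+1/(k−1)} n = O(log n) colors. -/

import Mathlib

/-- If every induced sub-hypergraph of a hypergraph `H` on `n ≥ 1` vertices admits a proper
(non-monochromatic) coloring with at most `k ≥ 2` colors, then `H` admits a conflict-free
coloring with at most `1 + log_{1+1/(k−1)} n` colors. -/
theorem cf_from_hereditary_proper {V : Type*} [Fintype V] [DecidableEq V]
    (n k : ℕ) (hn : Fintype.card V = n) (hn1 : 1 ≤ n) (hk : 2 ≤ k)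
    (E : Finset (Finset V))
    (hprop : ∀ W : Finset V, ∃ c : V → Fin k,
      ∀ e ∈ E, 2 ≤ (e ∩ W).card → ∃ x ∈ e ∩ W, ∃ y ∈ e ∩ W, c x ≠ c y) :
    ∃ N : ℕ, (N : ℝ) ≤ 1 + Real.logb (1 + 1 / ((k : ℝ) - 1)) n ∧
      ∃ ψ : V → Fin N,
        ∀ e ∈ E, e.Nonempty → ∃ x ∈ e, ∀ y ∈ e, y ≠ x → ψ y ≠ ψ x := by
  classical
  choose c hc using hprop
  -- a color class of maximal size
  have hmax : ∀ S : Finset V, ∃ j : Fin k, ∀ j' : Fin k,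
      (S.filter fun v => c S v = j').card ≤ (S.filter fun v => c S v = j).card := by
    intro S
    obtain ⟨j, _, hj⟩ := Finset.exists_max_image (Finset.univ : Finset (Fin k))
      (fun j => (S.filter fun v => c S v = j).card) ⟨⟨0, by omega⟩, Finset.mem_univ _⟩
    exact ⟨j, fun j' => hj j' (Finset.mem_univ _)⟩
  choose j hj using hmax
  set A : Finset V → Finset V := fun S => S.filter fun v => c S v = j S with hA
  have hAsub : ∀ S, A S ⊆ S := fun S => Finset.filter_subset _ _
  have hcard_le : ∀ S : Finset V, S.card ≤ k * (A S).card := by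
    intro S
    have h0 : S.card = ∑ j' : Fin k, (S.filter fun v => c S v = j').card :=
      Finset.card_eq_sum_card_fiberwise (fun x _ => Finset.mem_univ (c S x))
    calc S.card = ∑ j' : Fin k, (S.filter fun v => c S v = j').card := h0
      _ ≤ ∑ _j' : Fin k, (A S).card := Finset.sum_le_sum fun j' _ => hj S j'
      _ = k * (A S).card := by simp [mul_comm]
  set W : ℕ → Finset V := fun i => (fun S => S \ A S)^[i] Finset.univ with hW
  have hW0 : W 0 = Finset.univ := rfl
  have hWsucc : ∀ i, W (i + 1) = W i \ A (W i) := by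
    intro i
    simp only [hW, Function.iterate_succ_apply']
  have hanti : ∀ i m, i ≤ m → W m ⊆ W i := by
    intro i m him
    induction m with
    | zero => simp_all
    | succ m ih =>
      rcases Nat.lt_or_ge i (m + 1) with h | h
      · exact (hWsucc m ▸ Finset.sdiff_subset).trans (ih (by omega))
      · have : i = m + 1 := by omega
        subst this; exact Finset.Subset.refl _
  -- the key counting step
  have hstate : ∀ i, (W (i+1)).card + (A (W i)).card = (W i).card := by
    intro i
    rw [hWsucc]
    exact Finset.card_sdiff_add_card_eq_card (hAsub _)
  have hstep : ∀ i, k * (W (i+1)).card ≤ (k - 1) * (W i).card := by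
    intro i
    have h1 := hcard_le (W i)
    have h2 := hstate i
    set a := (A (W i)).card
    set w := (W i).card
    set d := (W (i+1)).card
    have hk1 : k = (k - 1) + 1 := by omega
    have hd : d ≤ (k - 1) * a := by nlinarith
    calc k * d = (k - 1 + 1) * d := by rw [← hk1]
      _ = (k - 1) * d + d := by rw [Nat.succ_mul]
      _ ≤ (k - 1) * d + (k - 1) * a := by omega
      _ = (k - 1) * (d + a) := (Nat.mul_add _ _ _).symm
      _ = (k - 1) * w := by rw [h2]
  have hdecr : ∀ i, (W i).Nonempty → (W (i+1)).card < (W i).card := by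
    intro i hne
    have h1 := hcard_le (W i)
    have h2 := hstate i
    have hw : 0 < (W i).card := Finset.card_pos.mpr hne
    have ha : 0 < (A (W i)).card := by nlinarith
    omega
  -- W n is empty
  have hWn : ∀ i, (W i).card + i ≤ n ∨ W i = ∅ := by
    intro i
    induction i with
    | zero => left; simp [hW0, hn]
    | succ i ih =>
      rcases ih with h | h
      · rcases Finset.eq_empty_or_nonempty (W i) with he | he
        · right; rw [hWsucc, he]; simp
        · left; have := hdecr i he; omega
      · right; rw [hWsucc, h]; simp
  have hex : ∃ i, W i = ∅ := by
    refine ⟨n, ?_⟩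
    rcases hWn n with h | h
    · exact Finset.card_eq_zero.mp (by omega)
    · exact h
  set N := Nat.find hex with hNdef
  have hN : W N = ∅ := Nat.find_spec hex
  have hNmin : ∀ i, i < N → (W i).Nonempty := fun i hi =>
    Finset.nonempty_iff_ne_empty.mpr (Nat.find_min hex hi)
  have hN1 : 1 ≤ N := by
    rcases Nat.eq_zero_or_pos N with h | h
    · exfalso
      rw [h, hW0] at hN
      have : Fintype.card V = 0 := by rw [← Finset.card_univ, hN, Finset.card_empty]
      omega
    · exact h
  -- removal time of each vertex
  have hexv : ∀ v : V, ∃ i, v ∉ W i := fun v => ⟨N, by rw [hN]; simp⟩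
  set τ : V → ℕ := fun v => Nat.find (hexv v) with hτ
  have hτ_notmem : ∀ v, v ∉ W (τ v) := fun v => Nat.find_spec (hexv v)
  have hτ1 : ∀ v, 1 ≤ τ v := by
    intro v
    rcases Nat.eq_zero_or_pos (τ v) with h | h
    · exfalso; have := hτ_notmem v; rw [h, hW0] at this; exact this (Finset.mem_univ v)
    · exact h
  have hτN : ∀ v, τ v ≤ N := fun v => Nat.find_le (by rw [hN]; simp)
  have hτ_le : ∀ v i, v ∉ W i → τ v ≤ i := fun v i h => Nat.find_le h
  have hτ_eq : ∀ v i, v ∈ W i → v ∉ W (i+1) → τ v = i + 1 := by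
    intro v i h1 h2
    have hle : τ v ≤ i + 1 := Nat.find_le h2
    have hgt : i < τ v := by
      by_contra h
      push_neg at h
      exact hτ_notmem v (hanti _ _ h h1)
    omega
  refine ⟨N, ?_, fun v => ⟨τ v - 1, by have := hτ1 v; have := hτN v; omega⟩, ?_⟩
  · -- numeric bound
    have hpow : ∀ i, (W i).card * k ^ i ≤ n * (k-1) ^ i := by
      intro i
      induction i with
      | zero => simp [hW0, Finset.card_univ, hn]
      | succ i ih =>
        calc (W (i+1)).card * k ^ (i+1) = (k * (W (i+1)).card) * k ^ i := by ring
          _ ≤ ((k-1) * (W i).card) * k ^ i := Nat.mul_le_mul_right _ (hstep i)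
          _ = ((W i).card * k ^ i) * (k-1) := by ring
          _ ≤ (n * (k-1)^i) * (k-1) := Nat.mul_le_mul_right _ ih
          _ = n * (k-1)^(i+1) := by ring
    set m := N - 1 with hm
    have hWm : (W m).Nonempty := hNmin m (by omega)
    have hcm : 1 ≤ (W m).card := Finset.card_pos.mpr hWm
    have h1 : k ^ m ≤ n * (k-1) ^ m := by
      calc k ^ m = 1 * k ^ m := (one_mul _).symm
        _ ≤ (W m).card * k ^ m := Nat.mul_le_mul_right _ hcm
        _ ≤ n * (k-1) ^ m := hpow m
    have hK2 : (2:ℝ) ≤ (k:ℝ) := by exact_mod_cast hk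
    have hKpos : (0:ℝ) < (k:ℝ) - 1 := by linarith
    have hb : (1 + 1 / ((k:ℝ) - 1)) = (k:ℝ) / ((k:ℝ) - 1) := by
      field_simp
      ring
    have hb1 : 1 < (1 + 1 / ((k:ℝ) - 1)) := by
      have : 0 < 1 / ((k:ℝ)-1) := by positivity
      linarith
    have h1' : ((k:ℝ))^m ≤ (n:ℝ) * ((k:ℝ)-1)^m := by
      have := h1
      zify [show 1 ≤ k by omega] at this
      exact_mod_cast this
    have hr : ((k:ℝ)/((k:ℝ)-1)) ^ m ≤ (n:ℝ) := by
      rw [div_pow, div_le_iff₀ (by positivity)]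
      exact h1'
    have hlog : (m:ℝ) ≤ Real.logb (1+1/((k:ℝ)-1)) n := by
      rw [Real.le_logb_iff_rpow_le hb1 (by exact_mod_cast hn1)]
      rw [Real.rpow_natCast, hb]
      exact hr
    have hNm : N = m + 1 := by omega
    rw [hNm]
    push_cast
    linarith
  · -- conflict-freeness
    intro e he hene
    have hexe : ∃ i, e ∩ W i = ∅ := ⟨N, by rw [hN]; simp⟩
    set t := Nat.find hexe with ht
    have ht_spec : e ∩ W t = ∅ := Nat.find_spec hexe
    have ht1 : 1 ≤ t := by
      rcases Nat.eq_zero_or_pos t with h | h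
      · exfalso; rw [h, hW0, Finset.inter_univ] at ht_spec; exact hene.ne_empty ht_spec
      · exact h
    set i := t - 1 with hi
    have hit : i + 1 = t := by omega
    have hne : (e ∩ W i).Nonempty :=
      Finset.nonempty_iff_ne_empty.mpr (Nat.find_min hexe (by omega))
    have hempty : e ∩ W (i+1) = ∅ := by rw [hit]; exact ht_spec
    have hmono : ∀ z ∈ e ∩ W i, c (W i) z = j (W i) := by
      intro z hz
      have hz1 : z ∈ W i := (Finset.mem_inter.mp hz).2
      have hz2 : z ∉ W (i+1) := by
        intro hz2
        have hmem : z ∈ e ∩ W (i+1) := Finset.mem_inter.mpr ⟨(Finset.mem_inter.mp hz).1, hz2⟩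
        rw [hempty] at hmem; simp at hmem
      rw [hWsucc] at hz2
      have hzA : z ∈ A (W i) := by
        by_contra hzA
        exact hz2 (Finset.mem_sdiff.mpr ⟨hz1, hzA⟩)
      simpa [hA] using (Finset.mem_filter.mp hzA).2
    have hcard1 : (e ∩ W i).card = 1 := by
      rcases Nat.lt_or_ge (e ∩ W i).card 2 with h | h
      · have := Finset.card_pos.mpr hne; omega
      · exfalso
        obtain ⟨x, hx, y, hy, hxy⟩ := hc (W i) e he h
        exact hxy (by rw [hmono x hx, hmono y hy])
    obtain ⟨x, hxeq⟩ := Finset.card_eq_one.mp hcard1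
    have hxmem : x ∈ e ∩ W i := hxeq ▸ Finset.mem_singleton_self x
    have hxe : x ∈ e := (Finset.mem_inter.mp hxmem).1
    have hxW : x ∈ W i := (Finset.mem_inter.mp hxmem).2
    have hxW1 : x ∉ W (i+1) := by
      intro h
      have hmem : x ∈ e ∩ W (i+1) := Finset.mem_inter.mpr ⟨hxe, h⟩
      rw [hempty] at hmem; simp at hmem
    have hτx : τ x = i + 1 := hτ_eq x i hxW hxW1
    refine ⟨x, hxe, ?_⟩
    intro y hye hyx
    have hyW : y ∉ W i := by
      intro h
      have hmem : y ∈ e ∩ W i := Finset.mem_inter.mpr ⟨hye, h⟩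
      rw [hxeq] at hmem
      exact hyx (Finset.mem_singleton.mp hmem)
    have hτy : τ y ≤ i := hτ_le y i hyW
    have hτy1 := hτ1 y
    intro hcontra
    simp only [Fin.mk.injEq] at hcontra
    omega
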